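/- arXiv:2007.06326 — 2 statements merged into one kernel-verified Lean document; each statement's English description precedes it below -/
import Mathlib

section
/- Let (X, B, ρ) be a standard Borel probability space, T : X → X an invertible measure-preserving Borel automorphism, 𝒫 a finite measurable partition of X, ξ a measurable partition of X, and n ≥ 1. Write 𝒫₀^{n-1}(x) for the atom of ⋁_{j=0}^{n-1} T^{-j}𝒫 containing x, and suppose that for every x ∈ X, T^{-n}(ξ(Tⁿx)) = ξ(x) ∩ 𝒫₀^{n-1}(x). Then for ρ-a.e. x, for every Borel set F ⊆ X: ρ_x^ξ(T^{-n}F ∩ 𝒫₀^{n-1}(x)) = ρ_{Tⁿx}^ξ(F) · ρ_x^ξ(𝒫₀^{n-1}(x)). -/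
open MeasureTheory Filter

theorem stmt16_aux {X : Type*} (m : MeasurableSpace X) [mX : MeasurableSpace X] [StandardBorelSpace X]
    (ρ : Measure X) [IsProbabilityMeasure ρ]
    (T : X ≃ᵐ X) (hT : MeasurePreserving (⇑T) ρ ρ)
    -- the finite measurable partition 𝒫
    {ι : Type*} [Fintype ι] (P : ι → Set X)
    (hPm : ∀ i, MeasurableSet (P i))
    (hPd : Pairwise (Function.onFun Disjoint P))
    (hPu : (⋃ i, P i) = Set.univ)
    -- the measurable partition ξ, given by its atom map ζ
    (ζ : X → Set X) (hζself : ∀ x, x ∈ ζ x)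
    (hζpart : ∀ x y, y ∈ ζ x → ζ y = ζ x)
    (hζmeas : ∃ G : ℕ → Set X, (∀ k, MeasurableSet (G k)) ∧ ∀ x,
      ζ x = (⋂ k ∈ {k | x ∈ G k}, G k) ∩ ⋂ k ∈ {k | x ∉ G k}, (G k)ᶜ)
    -- the σ-algebra ξ̂ of measurable ξ-saturated sets
    (hm : ∀ A : Set X, MeasurableSet[m] A ↔ (MeasurableSet[mX] A ∧ ∀ x ∈ A, ζ x ⊆ A))
    -- the disintegration of ρ with respect to ξ
    (ρx : X → @Measure X mX) (hρxprob : ∀ x, IsProbabilityMeasure (ρx x))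
    (hρx1 : ∀ x, ρx x (ζ x) = 1)
    (hρx2 : ∀ x y, ζ x = ζ y → ρx x = ρx y)
    (hρx3 : ∀ f : X → ℝ, Integrable f ρ → ∀ᵐ x ∂ρ, ∫ z, f z ∂(ρx x) = (ρ[f|m]) x)
    -- the compatibility hypothesis with the dynamics
    (n : ℕ) (hn : 1 ≤ n)
    (hcompat : ∀ x : X, (⇑T)^[n] ⁻¹' ζ ((⇑T)^[n] x) =
      ζ x ∩ {z | ∀ j < n, ∀ i, (⇑T)^[j] x ∈ P i → (⇑T)^[j] z ∈ P i}) :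
    ∀ᵐ x ∂ρ, ∀ F : Set X, MeasurableSet[mX] F →
      ρx x ((⇑T)^[n] ⁻¹' F ∩ {z | ∀ j < n, ∀ i, (⇑T)^[j] x ∈ P i → (⇑T)^[j] z ∈ P i}) =
        ρx ((⇑T)^[n] x) F *
          ρx x {z | ∀ j < n, ∀ i, (⇑T)^[j] x ∈ P i → (⇑T)^[j] z ∈ P i} := by
  classical
  set σ : X → X := (⇑T)^[n] with hσdef
  have hσmeas : Measurable σ := T.measurable.iterate n
  have hσp : MeasurePreserving σ ρ ρ := hT.iterate n
  have hσli : Function.LeftInverse ((⇑T.symm)^[n]) σ :=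
    Function.LeftInverse.iterate T.symm_apply_apply n
  have hσri : Function.RightInverse ((⇑T.symm)^[n]) σ :=
    Function.LeftInverse.iterate T.apply_symm_apply n
  have hσ'meas : Measurable ((⇑T.symm)^[n]) := T.symm.measurable.iterate n
  let E : X ≃ᵐ X :=
    { toFun := σ, invFun := (⇑T.symm)^[n], left_inv := hσli, right_inv := hσri,
      measurable_toFun := hσmeas, measurable_invFun := hσ'meas }
  have hEemb : MeasurableEmbedding σ := E.measurableEmbedding
  -- measurability of atoms of ζ
  obtain ⟨G, hGmeas, hGeq⟩ := hζmeas
  have hζm : ∀ x, MeasurableSet (ζ x) := by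
    intro x
    rw [hGeq x]
    exact (MeasurableSet.biInter (Set.to_countable _) fun k _ => hGmeas k).inter
      (MeasurableSet.biInter (Set.to_countable _) fun k _ => (hGmeas k).compl)
  have hmle : m ≤ mX := fun s hs => ((hm s).1 hs).1
  -- the word / cylinder machinery
  have hword : ∀ y : X, ∃ i, y ∈ P i := fun y => Set.mem_iUnion.1 (hPu ▸ Set.mem_univ y)
  choose idx hidx using hword
  have hidx_unique : ∀ y i, y ∈ P i → i = idx y := by
    intro y i hi
    by_contra h
    exact Set.disjoint_left.1 (hPd h) hi (hidx y)
  set A : (Fin n → ι) → Set X := fun w => ⋂ j : Fin n, (⇑T)^[(j : ℕ)] ⁻¹' P (w j) with hA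
  have hAmeas : ∀ w, MeasurableSet (A w) := fun w =>
    MeasurableSet.iInter fun j => (T.measurable.iterate _) (hPm _)
  have hxA : ∀ x, x ∈ A (fun j => idx ((⇑T)^[(j : ℕ)] x)) := fun x =>
    Set.mem_iInter.2 fun j => hidx _
  have hBA : ∀ (x : X) (w : Fin n → ι), x ∈ A w →
      {z | ∀ j < n, ∀ i, (⇑T)^[j] x ∈ P i → (⇑T)^[j] z ∈ P i} = A w := by
    intro x w hx
    ext z
    constructor
    · intro hz
      exact Set.mem_iInter.2 fun j => hz j j.isLt (w j) (Set.mem_iInter.1 hx j)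
    · intro hz j hj i hi
      have h1 : (⇑T)^[j] x ∈ P (w ⟨j, hj⟩) := Set.mem_iInter.1 hx ⟨j, hj⟩
      have h2 : i = idx ((⇑T)^[j] x) := hidx_unique _ _ hi
      have h3 : w ⟨j, hj⟩ = idx ((⇑T)^[j] x) := hidx_unique _ _ h1
      rw [h2, ← h3]
      exact Set.mem_iInter.1 hz ⟨j, hj⟩
  have key : ∀ (w : Fin n → ι) (x : X), x ∈ A w → σ ⁻¹' ζ (σ x) = ζ x ∩ A w := by
    intro w x hx
    rw [hσdef, hcompat x, hBA x w hx]
  -- saturated images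
  have hsat : ∀ S : Set X, MeasurableSet[m] S → MeasurableSet[m] (σ '' S) := by
    intro S hS
    rw [hm] at hS ⊢
    constructor
    · rw [Set.image_eq_preimage_of_inverse hσli hσri]
      exact hσ'meas hS.1
    · rintro y ⟨x, hxS, rfl⟩ u hu
      have h2 : (⇑T.symm)^[n] u ∈ σ ⁻¹' ζ (σ x) := by
        rw [Set.mem_preimage, hσri u]; exact hu
      rw [hσdef, hcompat x] at h2
      exact ⟨_, hS.2 x hxS h2.1, hσri u⟩
  have hm'le : (m.comap σ) ≤ mX := by
    rintro s ⟨S, hS, rfl⟩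
    exact hσmeas (hmle S hS)
  have hmm' : m ≤ (m.comap σ) := by
    intro S hS
    exact ⟨σ '' S, hsat S hS, Set.preimage_image_eq _ hσli.injective⟩
  have hζc : ∀ x, ρx x ((ζ x)ᶜ) = 0 := by
    intro x
    haveI := hρxprob x
    rw [measure_compl (hζm x) (measure_ne_top _ _), hρx1 x, measure_univ, tsub_self]
  -- main per-(F,w) lemma
  have main : ∀ F : Set X, MeasurableSet F → ∀ w : Fin n → ι,
      ∀ᵐ x ∂ρ, x ∈ A w → ρx x (σ ⁻¹' F ∩ A w) = ρx (σ x) F * ρx x (A w) := by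
    intro F hF w
    set f₁ : X → ℝ := (σ ⁻¹' F).indicator (fun _ => (1 : ℝ)) with hf₁
    have hf₁int : Integrable f₁ ρ := (integrable_const 1).indicator (hσmeas hF)
    set g : X → ℝ := ρ[f₁ | (m.comap σ)] with hg
    -- (a) : g =ᵐ[ρ] fun x => (ρx (σ x) F).toReal
    have hqa : (fun y => (ρx y F).toReal) =ᵐ[ρ] ρ[F.indicator (fun _ => (1 : ℝ)) | m] := by
      filter_upwards [hρx3 (F.indicator fun _ => (1 : ℝ))
        ((integrable_const 1).indicator hF)] with y hy
      rw [← hy]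
      haveI := hρxprob y
      exact (integral_indicator_one hF).symm
    have comp_ae : ∀ {u v : X → ℝ}, u =ᵐ[ρ] v →
        (fun x => u (σ x)) =ᵐ[ρ] (fun x => v (σ x)) := by
      intro u v h
      have h0 : ρ {y | u y ≠ v y} = 0 := by
        rw [Filter.EventuallyEq, ae_iff] at h
        exact h
      have h1 : ρ (σ ⁻¹' {y | u y ≠ v y}) = 0 :=
        hσp.quasiMeasurePreserving.preimage_null h0
      rw [Filter.EventuallyEq, ae_iff]
      exact h1
    have hmes_comp : AEStronglyMeasurable[m.comap σ]
        (fun x => (ρ[F.indicator (fun _ => (1 : ℝ)) | m]) (σ x)) ρ := by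
      refine StronglyMeasurable.aestronglyMeasurable ?_
      exact stronglyMeasurable_condExp.comp_measurable
        (measurable_iff_comap_le.2 le_rfl)
    have hcomp_int : Integrable (fun x => (ρ[F.indicator (fun _ => (1 : ℝ)) | m]) (σ x)) ρ := by
      have := (hσp.integrable_comp_emb hEemb
        (g := ρ[F.indicator (fun _ => (1 : ℝ)) | m])).2 integrable_condExp
      exact this
    have hqcond : (fun x => (ρ[F.indicator (fun _ => (1 : ℝ)) | m]) (σ x)) =ᵐ[ρ] g := by
      refine ae_eq_condExp_of_forall_setIntegral_eq hm'le hf₁int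
        (fun s _ _ => hcomp_int.integrableOn) ?_ hmes_comp
      rintro s ⟨S, hS, rfl⟩ _
      have h1 : ∫ x in σ ⁻¹' S, (ρ[F.indicator (fun _ => (1 : ℝ)) | m]) (σ x) ∂ρ =
          ∫ y in S, (ρ[F.indicator (fun _ => (1 : ℝ)) | m]) y ∂ρ :=
        hσp.setIntegral_preimage_emb hEemb _ S
      have h2 : ∫ y in S, (ρ[F.indicator (fun _ => (1 : ℝ)) | m]) y ∂ρ =
          ∫ y in S, F.indicator (fun _ => (1 : ℝ)) y ∂ρ :=
        setIntegral_condExp hmle ((integrable_const 1).indicator hF) hS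
      have hSm : MeasurableSet S := hmle S hS
      have h3 : ∫ y in S, F.indicator (fun _ => (1 : ℝ)) y ∂ρ = (ρ (F ∩ S)).toReal := by
        rw [setIntegral_indicator hF, setIntegral_const, smul_eq_mul, mul_one,
          Set.inter_comm, measureReal_def]
      have h4 : ∫ x in σ ⁻¹' S, f₁ x ∂ρ = (ρ (σ ⁻¹' F ∩ σ ⁻¹' S)).toReal := by
        rw [hf₁, setIntegral_indicator (hσmeas hF), setIntegral_const, smul_eq_mul,
          mul_one, Set.inter_comm, measureReal_def]
      have h5 : ρ (σ ⁻¹' F ∩ σ ⁻¹' S) = ρ (F ∩ S) := by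
        rw [← Set.preimage_inter]
        exact hσp.measure_preimage (hF.inter hSm).nullMeasurableSet
      rw [h1, h2, h3, h4, h5]
    have hga : g =ᵐ[ρ] fun x => (ρx (σ x) F).toReal :=
      hqcond.symm.trans (comp_ae hqa).symm
    -- measurable null superset for the exceptional set of (a)
    have hN0 : ρ {y | g y ≠ (ρx (σ y) F).toReal} = 0 := by
      rw [Filter.EventuallyEq, ae_iff] at hga
      exact hga
    obtain ⟨N, hNsub, hNmeas, hNnull⟩ := exists_measurable_superset_of_null hN0
    -- A w is (m.comap σ)-measurable
    have hAm' : MeasurableSet[(m.comap σ)] (A w) := by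
      refine ⟨σ '' (A w), ?_, Set.preimage_image_eq _ hσli.injective⟩
      rw [hm]
      refine ⟨?_, ?_⟩
      · rw [Set.image_eq_preimage_of_inverse hσli hσri]
        exact hσ'meas (hAmeas w)
      · rintro y ⟨x, hx, rfl⟩ u hu
        have h2 : (⇑T.symm)^[n] u ∈ σ ⁻¹' ζ (σ x) := by
          rw [Set.mem_preimage, hσri u]; exact hu
        rw [key w x hx] at h2
        exact ⟨_, h2.2, hσri u⟩
    -- tower property
    have hIndEq : (A w).indicator f₁ = (σ ⁻¹' F ∩ A w).indicator (fun _ => (1 : ℝ)) := by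
      rw [hf₁, Set.indicator_indicator, Set.inter_comm]
    have hinner : ρ[(σ ⁻¹' F ∩ A w).indicator (fun _ => (1 : ℝ)) | (m.comap σ)] =ᵐ[ρ]
        (A w).indicator g := by
      rw [← hIndEq]
      exact condExp_indicator hf₁int hAm'
    have hTower : ρ[(σ ⁻¹' F ∩ A w).indicator (fun _ => (1 : ℝ)) | m] =ᵐ[ρ]
        ρ[(A w).indicator g | m] :=
      ((condExp_condExp_of_le hmm' hm'le).symm.trans (condExp_congr_ae hinner))
    have hint2 : Integrable ((σ ⁻¹' F ∩ A w).indicator (fun _ => (1 : ℝ))) ρ :=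
      (integrable_const 1).indicator ((hσmeas hF).inter (hAmeas w))
    have hint3 : Integrable ((A w).indicator g) ρ :=
      integrable_condExp.indicator (hAmeas w)
    have h2 := hρx3 _ hint2
    have h3 := hρx3 _ hint3
    -- ρx x of null set is a.e. zero
    have hNind : (N.indicator (fun _ => (1 : ℝ)) : X → ℝ) =ᵐ[ρ] 0 := by
      filter_upwards [measure_eq_zero_iff_ae_notMem.1 hNnull] with y hy
      simp [Set.indicator_of_notMem hy]
    have hNcond : ρ[N.indicator (fun _ => (1 : ℝ)) | m] =ᵐ[ρ] 0 := by
      refine (condExp_congr_ae hNind).trans ?_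
      rw [condExp_zero]
    have h4 := hρx3 _ ((integrable_const (1 : ℝ)).indicator hNmeas)
    filter_upwards [h2, h3, hTower, h4, hNcond] with x hx2 hx3 hxT hx4 hxN hxAw
    haveI := hρxprob x
    haveI := hρxprob (σ x)
    have hρxN : ρx x N = 0 := by
      have : (ρx x N).toReal = 0 := by
        have e0 : ∫ z, N.indicator (fun _ => (1 : ℝ)) z ∂(ρx x) = (ρx x N).toReal := by
          rw [integral_indicator_const (1 : ℝ) hNmeas, smul_eq_mul, mul_one, measureReal_def]
        rw [← e0, hx4, hxN]
        rfl
      exact (ENNReal.toReal_eq_zero_iff _).1 this |>.resolve_right (measure_ne_top _ _)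
    -- left side
    have hLHS : (ρx x (σ ⁻¹' F ∩ A w)).toReal =
        ∫ z, (A w).indicator g z ∂(ρx x) := by
      have e1 : ∫ z, (σ ⁻¹' F ∩ A w).indicator (fun _ => (1 : ℝ)) z ∂(ρx x) =
          (ρx x (σ ⁻¹' F ∩ A w)).toReal := by
        rw [integral_indicator_const (1 : ℝ) ((hσmeas hF).inter (hAmeas w)), smul_eq_mul,
          mul_one, measureReal_def]
      rw [← e1, hx2, hxT, ← hx3]
    -- compute the right-hand integral
    set c : ℝ := (ρx (σ x) F).toReal with hc
    have hae : (A w).indicator g =ᵐ[ρx x] (A w).indicator (fun _ => c) := by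
      have hmemN : ∀ᵐ z ∂(ρx x), z ∉ N := measure_eq_zero_iff_ae_notMem.1 hρxN
      have hmemζ : ∀ᵐ z ∂(ρx x), z ∉ (ζ x)ᶜ := measure_eq_zero_iff_ae_notMem.1 (hζc x)
      filter_upwards [hmemN, hmemζ] with z hz1 hz2
      by_cases hzA : z ∈ A w
      · rw [Set.indicator_of_mem hzA, Set.indicator_of_mem hzA]
        have hgz : g z = (ρx (σ z) F).toReal := by
          by_contra hne
          exact hz1 (hNsub hne)
        have hzζ : z ∈ ζ x := Set.notMem_compl_iff.1 hz2
        have hσz : σ z ∈ ζ (σ x) := by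
          have : z ∈ σ ⁻¹' ζ (σ x) := (key w x hxAw) ▸ ⟨hzζ, hzA⟩
          exact this
        rw [hgz, hρx2 (σ z) (σ x) (hζpart (σ x) (σ z) hσz)]
      · rw [Set.indicator_of_notMem hzA, Set.indicator_of_notMem hzA]
    have hRHS : ∫ z, (A w).indicator g z ∂(ρx x) = (ρx x (A w)).toReal * c := by
      rw [integral_congr_ae hae, integral_indicator_const c (hAmeas w), smul_eq_mul, measureReal_def]
    have hfinal : (ρx x (σ ⁻¹' F ∩ A w)).toReal = ((ρx (σ x) F) * (ρx x (A w))).toReal := by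
      rw [hLHS, hRHS, ENNReal.toReal_mul, hc]
      ring
    exact (ENNReal.toReal_eq_toReal_iff' (measure_ne_top _ _)
      (ENNReal.mul_ne_top (measure_ne_top _ _) (measure_ne_top _ _))).1 hfinal
  -- countable generating π-system
  obtain ⟨s, hs_eq⟩ : ∃ s : ℕ → Set X, MeasurableSpace.countableGeneratingSet X = Set.range s :=
    (MeasurableSpace.countable_countableGeneratingSet).exists_eq_range
      ⟨∅, MeasurableSpace.empty_mem_countableGeneratingSet⟩
  have hs_meas : ∀ k, MeasurableSet (s k) := by
    intro k
    exact MeasurableSpace.measurableSet_countableGeneratingSet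
      (hs_eq ▸ Set.mem_range_self k)
  set C : Set (Set X) := Set.range (fun t : Finset ℕ => ⋂ i ∈ t, s i) with hC
  have hCcount : C.Countable := Set.countable_range _
  have hCmeas : ∀ F ∈ C, MeasurableSet F := by
    rintro _ ⟨t, rfl⟩
    exact Set.Finite.measurableSet_biInter t.finite_toSet fun i _ => hs_meas i
  have hCpi : IsPiSystem C := by
    rintro _ ⟨t₁, rfl⟩ _ ⟨t₂, rfl⟩ _
    refine ⟨t₁ ∪ t₂, ?_⟩
    ext z
    simp only [Set.mem_iInter, Finset.mem_union, Set.mem_inter_iff]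
    constructor
    · intro h
      exact ⟨fun i hi => h i (Or.inl hi), fun i hi => h i (Or.inr hi)⟩
    · rintro ⟨h1, h2⟩ i (hi | hi)
      exacts [h1 i hi, h2 i hi]
  have hgen : mX = MeasurableSpace.generateFrom C := by
    refine le_antisymm ?_ (MeasurableSpace.generateFrom_le hCmeas)
    conv_lhs => rw [← MeasurableSpace.generateFrom_countableGeneratingSet (α := X)]
    refine MeasurableSpace.generateFrom_le ?_
    intro u hu
    rw [hs_eq] at hu
    obtain ⟨k, rfl⟩ := hu
    refine MeasurableSpace.measurableSet_generateFrom ⟨{k}, ?_⟩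
    simp
  -- combine
  have hmain : ∀ᵐ x ∂ρ, ∀ w : Fin n → ι, ∀ F ∈ C, x ∈ A w →
      ρx x (σ ⁻¹' F ∩ A w) = ρx (σ x) F * ρx x (A w) := by
    rw [ae_all_iff]
    intro w
    rw [ae_ball_iff hCcount]
    intro F hF
    exact main F (hCmeas F hF) w
  filter_upwards [hmain] with x hx F hFmeas
  set w : Fin n → ι := fun j => idx ((⇑T)^[(j : ℕ)] x) with hw
  have hxw : x ∈ A w := hxA x
  rw [hBA x w hxw]
  haveI := hρxprob x
  haveI := hρxprob (σ x)
  haveI : IsFiniteMeasure (Measure.map σ ((ρx x).restrict (A w))) := by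
    constructor
    rw [Measure.map_apply hσmeas MeasurableSet.univ, Set.preimage_univ,
      Measure.restrict_apply MeasurableSet.univ, Set.univ_inter]
    exact lt_of_le_of_lt (measure_mono (Set.subset_univ _)) (measure_lt_top _ _)
  have hext : Measure.map σ ((ρx x).restrict (A w)) = (ρx x (A w)) • (ρx (σ x)) := by
    refine ext_of_generate_finite C hgen hCpi ?_ ?_
    · intro F' hF'
      rw [Measure.map_apply hσmeas (hCmeas F' hF'),
        Measure.restrict_apply (hσmeas (hCmeas F' hF')), Measure.smul_apply, smul_eq_mul,
        hx w F' hF' hxw, mul_comm]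
    · rw [Measure.map_apply hσmeas MeasurableSet.univ, Set.preimage_univ,
        Measure.restrict_apply MeasurableSet.univ, Set.univ_inter, Measure.smul_apply,
        measure_univ, smul_eq_mul, mul_one]
  have := congrArg (fun μ : Measure X => μ F) hext
  simp only [Measure.smul_apply, smul_eq_mul] at this
  rw [Measure.map_apply hσmeas hFmeas, Measure.restrict_apply (hσmeas hFmeas)] at this
  rw [this, mul_comm]

/-- Lemma 4.8 of the paper. Let `ζ` be a measurable partition (given by
its atom map), `m = ζ̂` the σ-algebra of measurable `ζ`-saturated sets, and `{ρx x}` the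
disintegration of `ρ` with respect to `ζ`. If `T⁻ⁿ(ζ(Tⁿx)) = ζ(x) ∩ 𝒫₀^{n-1}(x)` for all
`x`, then for `ρ`-a.e. `x` and every Borel `F`:
`ρ_x^ζ(T⁻ⁿF ∩ 𝒫₀^{n-1}(x)) = ρ_{Tⁿx}^ζ(F) · ρ_x^ζ(𝒫₀^{n-1}(x))`. -/
theorem stmt16 {X : Type*} [mX : MeasurableSpace X] [StandardBorelSpace X]
    (ρ : Measure X) [IsProbabilityMeasure ρ]
    (T : X ≃ᵐ X) (hT : MeasurePreserving (⇑T) ρ ρ)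
    -- the finite measurable partition 𝒫
    {ι : Type*} [Fintype ι] (P : ι → Set X)
    (hPm : ∀ i, MeasurableSet (P i))
    (hPd : Pairwise (Function.onFun Disjoint P))
    (hPu : (⋃ i, P i) = Set.univ)
    -- the measurable partition ξ, given by its atom map ζ
    (ζ : X → Set X) (hζself : ∀ x, x ∈ ζ x)
    (hζpart : ∀ x y, y ∈ ζ x → ζ y = ζ x)
    (hζmeas : ∃ G : ℕ → Set X, (∀ k, MeasurableSet (G k)) ∧ ∀ x,
      ζ x = (⋂ k ∈ {k | x ∈ G k}, G k) ∩ ⋂ k ∈ {k | x ∉ G k}, (G k)ᶜ)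
    -- the σ-algebra ξ̂ of measurable ξ-saturated sets
    (m : MeasurableSpace X)
    (hm : ∀ A : Set X, MeasurableSet[m] A ↔ (MeasurableSet[mX] A ∧ ∀ x ∈ A, ζ x ⊆ A))
    -- the disintegration of ρ with respect to ξ
    (ρx : X → @Measure X mX) (hρxprob : ∀ x, IsProbabilityMeasure (ρx x))
    (hρx1 : ∀ x, ρx x (ζ x) = 1)
    (hρx2 : ∀ x y, ζ x = ζ y → ρx x = ρx y)
    (hρx3 : ∀ f : X → ℝ, Integrable f ρ → ∀ᵐ x ∂ρ, ∫ z, f z ∂(ρx x) = (ρ[f|m]) x)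
    -- the compatibility hypothesis with the dynamics
    (n : ℕ) (hn : 1 ≤ n)
    (hcompat : ∀ x : X, (⇑T)^[n] ⁻¹' ζ ((⇑T)^[n] x) =
      ζ x ∩ {z | ∀ j < n, ∀ i, (⇑T)^[j] x ∈ P i → (⇑T)^[j] z ∈ P i}) :
    ∀ᵐ x ∂ρ, ∀ F : Set X, MeasurableSet[mX] F →
      ρx x ((⇑T)^[n] ⁻¹' F ∩ {z | ∀ j < n, ∀ i, (⇑T)^[j] x ∈ P i → (⇑T)^[j] z ∈ P i}) =
        ρx ((⇑T)^[n] x) F *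
          ρx x {z | ∀ j < n, ∀ i, (⇑T)^[j] x ∈ P i → (⇑T)^[j] z ∈ P i} := by
  exact stmt16_aux (mX := mX) m ρ T hT P hPm hPd hPu ζ hζself hζpart hζmeas hm ρx hρxprob hρx1 hρx2
    hρx3 n hn hcompat
end

section
/- Let V = E₀ ⊕ ⋯ ⊕ E_s be a direct-sum decomposition of V into nonzero subspaces with s ≥ 1 and dim E₀ = 1, let κ = κ(E₀,…,E_s), let u₀ ∈ E₀ be a unit vector, and let 1 ≤ j ≤ s. Then |P_{(Vʲ)^⊥} u₀| ≥ κ/2, where Vʲ = E_{j+1} ⊕ ⋯ ⊕ E_s and P_{(Vʲ)^⊥} is the orthogonal projection onto (Vʲ)^⊥ (for j = s this is the identity). -/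
open scoped RealInnerProductSpace
open Filter

variable {V : Type*} [NormedAddCommGroup V] [InnerProductSpace ℝ V]

/-- The projective distance between the lines spanned by two nonzero vectors:
`d(x̄, ȳ) = (1 − ⟨x,y⟫²/(|x|²|y|²))^{1/2}`. -/
noncomputable def projDist (x y : V) : ℝ :=
  Real.sqrt (1 - ⟪x, y⟫ ^ 2 / (‖x‖ ^ 2 * ‖y‖ ^ 2))

/-- The distance `d(x̄, P(W))` from the line spanned by `x` to the projective space of the
submodule `W`. -/
noncomputable def projDistToSub (x : V) (W : Submodule ℝ V) : ℝ :=
  sInf {r : ℝ | ∃ y : V, y ∈ W ∧ y ≠ 0 ∧ r = projDist x y}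

/-- `κ(E₀,…,E_s)`: the minimal projective distance between nonzero vectors lying in sums of
disjoint subfamilies of the `E i`. -/
noncomputable def kappa {ι : Type*} (E : ι → Submodule ℝ V) : ℝ :=
  sInf {r : ℝ | ∃ (I J : Finset ι) (x y : V), I.Nonempty ∧ J.Nonempty ∧ Disjoint I J ∧
    x ∈ (⨆ i ∈ I, E i) ∧ x ≠ 0 ∧ y ∈ (⨆ j ∈ J, E j) ∧ y ≠ 0 ∧ r = projDist x y}

/-- `Vⁱ = E_{i+1} ⊕ ⋯ ⊕ E_s`. -/
noncomputable def Vlow {s : ℕ} (E : Fin (s+1) → Submodule ℝ V) (i : ℕ) : Submodule ℝ V :=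
  ⨆ j : Fin (s+1), ⨆ _ : i < (j : ℕ), E j

/-- `Wⁱ = E₀ ⊕ ⋯ ⊕ E_i`. -/
noncomputable def Whigh {s : ℕ} (E : Fin (s+1) → Submodule ℝ V) (i : ℕ) : Submodule ℝ V :=
  ⨆ j : Fin (s+1), ⨆ _ : (j : ℕ) ≤ i, E j

/-- `‖x ∧ y‖ = (|x|²|y|² − ⟨x,y⟫²)^{1/2}`, the area of the parallelogram spanned by `x, y`. -/
noncomputable def wedgeNorm (x y : V) : ℝ :=
  Real.sqrt (‖x‖ ^ 2 * ‖y‖ ^ 2 - ⟪x, y⟫ ^ 2)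

/-- an estimate from the proof of Proposition 4.3 of the paper. For a
splitting `V = E₀ ⊕ ⋯ ⊕ E_s` with `dim E₀ = 1`, a unit vector `u₀ ∈ E₀` and `1 ≤ j ≤ s`:
`|P_{(Vʲ)^⊥} u₀| ≥ κ/2`. -/
theorem stmt18 [FiniteDimensional ℝ V] (hdim : 2 ≤ Module.finrank ℝ V)
    (s : ℕ) (hs : 1 ≤ s) (E : Fin (s+1) → Submodule ℝ V)
    (hE : DirectSum.IsInternal E) (hEne : ∀ k, E k ≠ ⊥)
    (hE0 : Module.finrank ℝ (E 0) = 1)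
    (u₀ : V) (hu₀ : u₀ ∈ E 0) (hu₀n : ‖u₀‖ = 1)
    (j : ℕ) (hj1 : 1 ≤ j) (hj2 : j ≤ s) :
    kappa E / 2 ≤ ‖(Submodule.orthogonalProjection (Vlow E j)ᗮ u₀ : V)‖ := by
  classical
  set W := Vlow E j with hWdef
  have hbdd : BddBelow {r : ℝ | ∃ (I J : Finset (Fin (s+1))) (x y : V),
      I.Nonempty ∧ J.Nonempty ∧ Disjoint I J ∧
      x ∈ (⨆ i ∈ I, E i) ∧ x ≠ 0 ∧ y ∈ (⨆ j ∈ J, E j) ∧ y ≠ 0 ∧ r = projDist x y} := by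
    refine ⟨0, ?_⟩
    rintro r ⟨I, J, x, y, -, -, -, -, -, -, -, rfl⟩
    exact Real.sqrt_nonneg _
  -- κ ≤ 1
  have hκ1 : kappa E ≤ 1 := by
    obtain ⟨x, hx, hx0⟩ := Submodule.ne_bot_iff (E 0) |>.mp (hEne 0)
    obtain ⟨z, hz, hz0⟩ := Submodule.ne_bot_iff (E 1) |>.mp (hEne 1)
    have h01 : (0 : Fin (s+1)) ≠ 1 := by
      intro h
      have h2 := congrArg (Fin.val) h
      simp [Fin.val_one'] at h2
      omega
    have hmem : projDist x z ∈ {r : ℝ | ∃ (I J : Finset (Fin (s+1))) (x y : V),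
        I.Nonempty ∧ J.Nonempty ∧ Disjoint I J ∧
        x ∈ (⨆ i ∈ I, E i) ∧ x ≠ 0 ∧ y ∈ (⨆ j ∈ J, E j) ∧ y ≠ 0 ∧ r = projDist x y} := by
      refine ⟨{0}, {1}, x, z, Finset.singleton_nonempty _, Finset.singleton_nonempty _,
        Finset.disjoint_singleton.mpr h01, ?_, hx0, ?_, hz0, rfl⟩
      · exact Submodule.mem_iSup_of_mem 0 (Submodule.mem_iSup_of_mem (Finset.mem_singleton_self 0) hx)
      · exact Submodule.mem_iSup_of_mem 1 (Submodule.mem_iSup_of_mem (Finset.mem_singleton_self 1) hz)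
    have hle : projDist x z ≤ 1 := by
      rw [projDist]
      apply Real.sqrt_le_one.mpr
      have : 0 ≤ ⟪x, z⟫ ^ 2 / (‖x‖ ^ 2 * ‖z‖ ^ 2) := by positivity
      linarith
    exact le_trans (csInf_le hbdd hmem) hle
  have hκ0 : 0 ≤ kappa E := Real.sInf_nonneg fun r hr => by
    obtain ⟨I, J, x, y, -, -, -, -, -, -, -, rfl⟩ := hr
    exact Real.sqrt_nonneg _
  set y : V := (Submodule.orthogonalProjection W u₀ : V) with hydef
  have hyW : y ∈ W := (Submodule.orthogonalProjection W u₀).2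
  have hproj : ((Submodule.orthogonalProjection Wᗮ u₀ : V)) = u₀ - y :=
    Submodule.starProjection_orthogonal_val (K := W) u₀
  by_cases hy0 : y = 0
  · rw [hproj, hy0, sub_zero, hu₀n]; linarith
  · -- the index set
    set J : Finset (Fin (s+1)) := Finset.univ.filter (fun i => j < (i : ℕ)) with hJdef
    have hWJ : W = ⨆ i ∈ J, E i := by
      rw [hWdef, Vlow]
      apply iSup_congr
      intro i
      simp [hJdef]
    have hJne : J.Nonempty := by
      rw [Finset.nonempty_iff_ne_empty]
      intro h
      apply hy0
      have : W = ⊥ := by rw [hWJ, h]; simp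
      simpa [this] using hyW
    have hdisj : Disjoint ({0} : Finset (Fin (s+1))) J := by
      rw [Finset.disjoint_singleton_left, hJdef]
      simp
    have hu00 : u₀ ≠ 0 := by intro h; rw [h, norm_zero] at hu₀n; norm_num at hu₀n
    have hκle : kappa E ≤ projDist u₀ y := by
      refine csInf_le hbdd ?_
      refine ⟨{0}, J, u₀, y, Finset.singleton_nonempty _, hJne, hdisj, ?_, hu00, ?_, hy0, rfl⟩
      · exact Submodule.mem_iSup_of_mem 0 (Submodule.mem_iSup_of_mem (Finset.mem_singleton_self 0) hu₀)
      · rw [← hWJ]; exact hyW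
    -- compute projDist u₀ y = ‖u₀ - y‖
    have horth : u₀ - y ∈ Wᗮ := Submodule.sub_starProjection_mem_orthogonal (K := W) u₀
    have hinner : ⟪u₀, y⟫ = ‖y‖ ^ 2 := by
      have h0 : ⟪y, u₀ - y⟫ = 0 := horth y hyW
      rw [inner_sub_right] at h0
      have : ⟪y, u₀⟫ = ⟪y, y⟫ := by linarith
      rw [real_inner_comm, this, real_inner_self_eq_norm_sq]
    have hny : ‖y‖ ≠ 0 := fun h => hy0 (norm_eq_zero.mp h)
    have hpd : projDist u₀ y = Real.sqrt (1 - ‖y‖ ^ 2) := by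
      rw [projDist, hinner, hu₀n]
      congr 1
      field_simp
    have hnorm : ‖u₀ - y‖ = Real.sqrt (1 - ‖y‖ ^ 2) := by
      have hsq : ‖u₀ - y‖ ^ 2 = 1 - ‖y‖ ^ 2 := by
        rw [@norm_sub_sq_real, hinner, hu₀n]; ring
      rw [← hsq, Real.sqrt_sq (norm_nonneg _)]
    rw [hproj, hnorm, ← hpd]
    linarith
end
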